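/- Let f : {-1,1}^n → {-1,1} be a Boolean function, let ε ∈ [0,1), and let p : {-1,1}^n → ℝ be any multilinear polynomial satisfying |f(x) − p(x)| ≤ ε for every x ∈ {-1,1}^n. Then max_{S ⊆ [n]} |f̂(S)| ≥ (1−ε) / (Σ_{S ⊆ [n]} |p̂(S)|). Consequently, the Fourier min-entropy satisfies H_∞(f̂²) ≤ 2·log₂( (Σ_S |p̂(S)|) / (1−ε) ). -/

import Mathlib

open Finset

/-- The real value (`1` or `-1`) encoded by a Boolean. -/
noncomputable def bsgn (b : Bool) : ℝ := if b then 1 else -1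

/-- The character `χ_S(x) = ∏_{i ∈ S} x_i` on the hypercube `{-1,1}^n`. -/
noncomputable def chi {n : ℕ} (S : Finset (Fin n)) (x : Fin n → Bool) : ℝ :=
  ∏ i ∈ S, bsgn (x i)

/-- The Fourier coefficient `f̂(S) = E_x [f(x)·χ_S(x)]`. -/
noncomputable def fCoeff {n : ℕ} (f : (Fin n → Bool) → ℝ) (S : Finset (Fin n)) : ℝ :=
  (∑ x : Fin n → Bool, f x * chi S x) / 2 ^ n

/-- The Fourier (Shannon) entropy `H(f̂²) = Σ_S f̂(S)² log₂(1/f̂(S)²)`. -/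
noncomputable def fEntropy {n : ℕ} (f : (Fin n → Bool) → ℝ) : ℝ :=
  ∑ S : Finset (Fin n), (fCoeff f S) ^ 2 * Real.logb 2 (1 / (fCoeff f S) ^ 2)

/-- The Fourier min-entropy `H_∞(f̂²) = min_{S : f̂(S) ≠ 0} log₂(1/f̂(S)²)`. -/
noncomputable def fMinEntropy {n : ℕ} (f : (Fin n → Bool) → ℝ) : ℝ :=
  sInf {y : ℝ | ∃ S : Finset (Fin n),
    fCoeff f S ≠ 0 ∧ y = Real.logb 2 (1 / (fCoeff f S) ^ 2)}

/-- The total influence `Inf(f) = Σ_S |S|·f̂(S)²`. -/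
noncomputable def totalInf {n : ℕ} (f : (Fin n → Bool) → ℝ) : ℝ :=
  ∑ S : Finset (Fin n), (S.card : ℝ) * (fCoeff f S) ^ 2

/-- `f` is a Boolean (`±1`-valued) function. -/
def IsBooleanFunc {n : ℕ} (f : (Fin n → Bool) → ℝ) : Prop := ∀ x, f x = 1 ∨ f x = -1

lemma sum_chi_mul {n : ℕ} (x y : Fin n → Bool) :
    ∑ S : Finset (Fin n), chi S x * chi S y = if x = y then (2:ℝ) ^ n else 0 := by
  have h1 : ∀ S : Finset (Fin n), chi S x * chi S y
      = ∏ i ∈ S, (bsgn (x i) * bsgn (y i)) := by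
    intro S; rw [chi, chi, ← Finset.prod_mul_distrib]
  simp only [h1]
  have h2 : ∑ S : Finset (Fin n), ∏ i ∈ S, (bsgn (x i) * bsgn (y i))
      = ∏ i : Fin n, (bsgn (x i) * bsgn (y i) + 1) := by
    rw [Finset.prod_add]
    rw [← Finset.powerset_univ]
    exact Finset.sum_congr rfl (by simp)
  rw [h2]
  have h3 : ∀ i : Fin n, bsgn (x i) * bsgn (y i) + 1
      = if x i = y i then (2:ℝ) else 0 := by
    intro i; cases hx : x i <;> cases hy : y i <;> simp [bsgn] <;> norm_num
  simp only [h3]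
  by_cases hxy : x = y
  · subst hxy; simp
  · rw [if_neg hxy]
    obtain ⟨i, hi⟩ : ∃ i, x i ≠ y i := by
      by_contra h; push_neg at h; exact hxy (funext h)
    exact Finset.prod_eq_zero (Finset.mem_univ i) (by simp [hi])

lemma plancherel {n : ℕ} (f g : (Fin n → Bool) → ℝ) :
    ∑ S : Finset (Fin n), fCoeff f S * fCoeff g S =
    (∑ x : Fin n → Bool, f x * g x) / 2 ^ n := by
  have key : ∀ S : Finset (Fin n), fCoeff f S * fCoeff g S
      = (∑ x : Fin n → Bool, ∑ y : Fin n → Bool,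
          f x * g y * (chi S x * chi S y)) / (2 ^ n * 2 ^ n) := by
    intro S
    rw [fCoeff, fCoeff, div_mul_div_comm, Finset.sum_mul_sum]
    congr 1
    exact Finset.sum_congr rfl fun x _ => Finset.sum_congr rfl fun y _ => by ring
  simp only [key]
  rw [← Finset.sum_div]
  rw [Finset.sum_comm]
  have : ∀ x : Fin n → Bool,
      ∑ S : Finset (Fin n), ∑ y : Fin n → Bool, f x * g y * (chi S x * chi S y)
      = f x * g x * 2 ^ n := by
    intro x
    rw [Finset.sum_comm]
    have : ∀ y : Fin n → Bool,
        ∑ S : Finset (Fin n), f x * g y * (chi S x * chi S y)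
        = f x * g y * (if x = y then (2:ℝ)^n else 0) := by
      intro y; rw [← Finset.mul_sum, sum_chi_mul]
    simp only [this, mul_ite, mul_zero]
    rw [Finset.sum_ite_eq (Finset.univ) x (fun y => f x * g y * (2:ℝ)^n)]
    simp
  simp only [this]
  rw [← Finset.sum_mul]
  field_simp

set_option maxHeartbeats 1000000 in
/-- If `p` is a multilinear polynomial (equivalently, an arbitrary real
function on the hypercube, with its unique Fourier expansion) that `ε`-approximates a
Boolean function `f` pointwise, with `ε ∈ [0,1)`, then
`max_S |f̂(S)| ≥ (1-ε) / Σ_S |p̂(S)|`, and consequently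
`H_∞(f̂²) ≤ 2 log₂( (Σ_S |p̂(S)|) / (1-ε) )`. -/
theorem stmt0 {n : ℕ} (f p : (Fin n → Bool) → ℝ) (hf : IsBooleanFunc f)
    (ε : ℝ) (hε0 : 0 ≤ ε) (hε1 : ε < 1)
    (happrox : ∀ x, |f x - p x| ≤ ε) :
    (1 - ε) / (∑ S : Finset (Fin n), |fCoeff p S|) ≤
      Finset.univ.sup' Finset.univ_nonempty (fun S : Finset (Fin n) => |fCoeff f S|) ∧
    fMinEntropy f ≤
      2 * Real.logb 2 ((∑ S : Finset (Fin n), |fCoeff p S|) / (1 - ε)) := by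
  set A := ∑ S : Finset (Fin n), |fCoeff p S| with hA
  set M := Finset.univ.sup' Finset.univ_nonempty
      (fun S : Finset (Fin n) => |fCoeff f S|) with hM
  have hfabs : ∀ x, |f x| = 1 := by
    intro x; rcases hf x with h | h <;> simp [h]
  have h1 : ∀ x, 1 - ε ≤ f x * p x := by
    intro x
    have hff : f x * f x = 1 := by rcases hf x with h | h <;> simp [h]
    have : f x * p x = f x * f x - f x * (f x - p x) := by ring
    rw [this, hff]
    have hb : |f x * (f x - p x)| ≤ ε := by
      rw [abs_mul, hfabs x, one_mul]; exact happrox x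
    have := (abs_le.mp hb).2
    linarith
  have h2 : 1 - ε ≤ ∑ S : Finset (Fin n), fCoeff f S * fCoeff p S := by
    rw [plancherel]
    rw [le_div_iff₀ (by positivity : (0:ℝ) < 2 ^ n)]
    calc (1 - ε) * 2 ^ n = ∑ _x : Fin n → Bool, (1 - ε) := by
          simp [Finset.sum_const, Finset.card_univ, mul_comm]; ring
      _ ≤ ∑ x : Fin n → Bool, f x * p x := Finset.sum_le_sum fun x _ => h1 x
  have hM0 : 0 ≤ M := le_trans (abs_nonneg _)
    (Finset.le_sup' (fun S : Finset (Fin n) => |fCoeff f S|) (Finset.mem_univ ∅))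
  have h3 : ∑ S : Finset (Fin n), fCoeff f S * fCoeff p S ≤ M * A := by
    rw [hA, Finset.mul_sum]
    refine Finset.sum_le_sum fun S _ => ?_
    calc fCoeff f S * fCoeff p S ≤ |fCoeff f S * fCoeff p S| := le_abs_self _
      _ = |fCoeff f S| * |fCoeff p S| := abs_mul _ _
      _ ≤ M * |fCoeff p S| := by
          exact mul_le_mul_of_nonneg_right
            (Finset.le_sup' (fun S : Finset (Fin n) => |fCoeff f S|)
              (Finset.mem_univ S)) (abs_nonneg _)
  have hMA : 1 - ε ≤ M * A := le_trans h2 h3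
  have hεpos : 0 < 1 - ε := by linarith
  have hApos : 0 < A := by
    rcases lt_or_eq_of_le (Finset.sum_nonneg fun S _ => abs_nonneg (fCoeff p S)) with h | h
    · exact h
    · exfalso; rw [hA, ← h] at hMA; simp at hMA; linarith
  have part1 : (1 - ε) / A ≤ M := (div_le_iff₀ hApos).mpr hMA
  refine ⟨part1, ?_⟩
  have hMpos : 0 < M := lt_of_lt_of_le (by positivity) part1
  obtain ⟨S₀, _, hS₀⟩ := Finset.exists_mem_eq_sup' (Finset.univ_nonempty)
      (fun S : Finset (Fin n) => |fCoeff f S|)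
  have hS₀M : |fCoeff f S₀| = M := hS₀.symm
  have hne : fCoeff f S₀ ≠ 0 := by
    intro h; rw [h, abs_zero] at hS₀M; linarith
  have hmem : Real.logb 2 (1 / (fCoeff f S₀) ^ 2) ∈
      {y : ℝ | ∃ S : Finset (Fin n),
        fCoeff f S ≠ 0 ∧ y = Real.logb 2 (1 / (fCoeff f S) ^ 2)} := ⟨S₀, hne, rfl⟩
  have hbdd : BddBelow {y : ℝ | ∃ S : Finset (Fin n),
      fCoeff f S ≠ 0 ∧ y = Real.logb 2 (1 / (fCoeff f S) ^ 2)} := by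
    apply Set.Finite.bddBelow
    apply Set.Finite.subset (Set.finite_range
      (fun S : Finset (Fin n) => Real.logb 2 (1 / (fCoeff f S) ^ 2)))
    rintro y ⟨S, _, rfl⟩; exact ⟨S, rfl⟩
  refine le_trans (csInf_le hbdd hmem) ?_
  have heq : 1 / (fCoeff f S₀) ^ 2 = (1 / M) ^ 2 := by
    rw [div_pow, one_pow, ← hS₀M, sq_abs]
  rw [heq, Real.logb_pow]
  push_cast
  have hle : 1 / M ≤ A / (1 - ε) := by
    rw [div_le_div_iff₀ hMpos hεpos]
    linarith [hMA]
  have h10 : (0:ℝ) < 1 / M := by positivity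
  have h11 : (0:ℝ) < A / (1 - ε) := div_pos hApos hεpos
  have := (Real.logb_le_logb (b := 2) one_lt_two h10 h11).mpr hle
  linarith [this]
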